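/- arXiv:2504.09494 — 5 statements merged into one kernel-verified Lean document; each statement's English description precedes it below -/
import Mathlib

section
/- Let K be a convex set and f, g : K → ℝ with g > 0 on K. Then on the domain where all three quantities are defined, the harmonic concavity functions satisfy HC_{f−g} ≥ HC_f − HC_g. In particular, if HC_g ≤ 0 everywhere on its domain (for example g constant), then HC_{f−g} ≥ HC_f. -/
open Classical in
/-- Harmonic concavity function of `h`. -/
noncomputable def HCfun {n : ℕ} (h : (Fin n → ℝ) → ℝ) (x₁ x₃ : Fin n → ℝ) (l : ℝ) : ℝ :=
  if 0 < l * h x₁ + (1 - l) * h x₃ then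
    h ((1 - l) • x₁ + l • x₃) - h x₁ * h x₃ / (l * h x₁ + (1 - l) * h x₃)
  else h ((1 - l) • x₁ + l • x₃)

/-- The domain of the harmonic concavity function of `h`. -/
def HCdom {n : ℕ} (h : (Fin n → ℝ) → ℝ) (x₁ x₃ : Fin n → ℝ) (l : ℝ) : Prop :=
  0 < l * h x₁ + (1 - l) * h x₃ ∨ (h x₁ = 0 ∧ h x₃ = 0)

lemma HC_sub_ge_aux {n : ℕ} (f g : (Fin n → ℝ) → ℝ) (x₁ x₃ : Fin n → ℝ) (l : ℝ)
    (hl0 : 0 ≤ l) (hl1 : l ≤ 1) (hg1 : 0 < g x₁) (hg3 : 0 < g x₃)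
    (hdom : HCdom (fun x => f x - g x) x₁ x₃ l) :
    HCfun f x₁ x₃ l - HCfun g x₁ x₃ l ≤ HCfun (fun x => f x - g x) x₁ x₃ l := by
  have hDg : 0 < l * g x₁ + (1 - l) * g x₃ := by
    rcases lt_or_eq_of_le hl0 with h | h
    · have h1 : 0 ≤ (1 - l) * g x₃ := mul_nonneg (by linarith) hg3.le
      nlinarith [mul_pos h hg1]
    · rw [← h]; simp; linarith
  rcases hdom with hpos | ⟨hf1, hf3⟩
  · simp only at hpos
    have hDf : 0 < l * f x₁ + (1 - l) * f x₃ := by nlinarith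
    simp only [HCfun, if_pos hDf, if_pos hDg, if_pos hpos]
    have key : (f x₁ - g x₁) * (f x₃ - g x₃) / (l * (f x₁ - g x₁) + (1 - l) * (f x₃ - g x₃))
        ≤ f x₁ * f x₃ / (l * f x₁ + (1 - l) * f x₃) - g x₁ * g x₃ / (l * g x₁ + (1 - l) * g x₃) := by
      rw [div_sub_div _ _ hDf.ne' hDg.ne', div_le_div_iff₀ hpos (mul_pos hDf hDg)]
      nlinarith [mul_nonneg (mul_nonneg hl0 (by linarith : (0:ℝ) ≤ 1 - l))
        (sq_nonneg (f x₁ * g x₃ - f x₃ * g x₁))]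
    linarith
  · simp only at hf1 hf3
    have hf1' : f x₁ = g x₁ := by linarith
    have hf3' : f x₃ = g x₃ := by linarith
    have hneg : ¬ (0 < l * (f x₁ - g x₁) + (1 - l) * (f x₃ - g x₃)) := by
      rw [hf1', hf3']; simp
    have hDf : 0 < l * f x₁ + (1 - l) * f x₃ := by rw [hf1', hf3']; exact hDg
    simp only [HCfun, if_pos hDf, if_pos hDg, if_neg hneg]
    rw [hf1', hf3']
    ring_nf
    linarith

/-- If `g > 0` on the convex set `K`, then on the domain of
`HC_{f-g}` one has `HC_{f-g} ≥ HC_f - HC_g`; in particular if `HC_g ≤ 0`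
everywhere then `HC_{f-g} ≥ HC_f`. -/
theorem HC_sub_ge {n : ℕ} (K : Set (Fin n → ℝ)) (hK : Convex ℝ K)
    (f g : (Fin n → ℝ) → ℝ) (hgpos : ∀ x ∈ K, 0 < g x) :
    (∀ x₁ ∈ K, ∀ x₃ ∈ K, ∀ l : ℝ, 0 ≤ l → l ≤ 1 →
        HCdom (fun x => f x - g x) x₁ x₃ l →
        HCfun f x₁ x₃ l - HCfun g x₁ x₃ l ≤ HCfun (fun x => f x - g x) x₁ x₃ l) ∧
    ((∀ x₁ ∈ K, ∀ x₃ ∈ K, ∀ l : ℝ, 0 ≤ l → l ≤ 1 → HCfun g x₁ x₃ l ≤ 0) →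
      ∀ x₁ ∈ K, ∀ x₃ ∈ K, ∀ l : ℝ, 0 ≤ l → l ≤ 1 →
        HCdom (fun x => f x - g x) x₁ x₃ l →
        HCfun f x₁ x₃ l ≤ HCfun (fun x => f x - g x) x₁ x₃ l) := by
  constructor
  · intro x₁ h1 x₃ h3 l hl0 hl1 hdom
    exact HC_sub_ge_aux f g x₁ x₃ l hl0 hl1 (hgpos x₁ h1) (hgpos x₃ h3) hdom
  · intro hHCg x₁ h1 x₃ h3 l hl0 hl1 hdom
    have h := HC_sub_ge_aux f g x₁ x₃ l hl0 hl1 (hgpos x₁ h1) (hgpos x₃ h3) hdom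
    have h2 := hHCg x₁ h1 x₃ h3 l hl0 hl1
    linarith
end

section
/- If u : K → (0,∞) is a positive function on a convex set K and u is harmonic concave (i.e., 1/u is convex), then for every constant k ≥ 0 the function u − k is harmonic concave, in the sense that HC_{u−k} ≥ 0 on the domain of HC_{u−k}. -/
/-- If `u > 0` is harmonic concave on a convex set `K`, then for
every constant `k ≥ 0` the function `u - k` is harmonic concave on the domain of
its harmonic concavity function. -/
theorem HC_sub_const_nonneg {n : ℕ} (K : Set (Fin n → ℝ)) (hK : Convex ℝ K)
    (u : (Fin n → ℝ) → ℝ) (hu : ∀ x ∈ K, 0 < u x)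
    (hhc : ∀ x₁ ∈ K, ∀ x₃ ∈ K, ∀ l ∈ Set.Icc (0:ℝ) 1, 0 ≤ HCfun u x₁ x₃ l)
    (k : ℝ) (hk : 0 ≤ k) :
    ∀ x₁ ∈ K, ∀ x₃ ∈ K, ∀ l ∈ Set.Icc (0:ℝ) 1,
      HCdom (fun x => u x - k) x₁ x₃ l → 0 ≤ HCfun (fun x => u x - k) x₁ x₃ l := by
  intro x₁ hx₁ x₃ hx₃ l hl hdom
  obtain ⟨hl0, hl1⟩ := hl
  have ha := hu x₁ hx₁
  have hc := hu x₃ hx₃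
  have hx₂ : (1 - l) • x₁ + l • x₃ ∈ K := hK hx₁ hx₃ (by linarith) hl0 (by ring)
  have hb := hu _ hx₂
  set a := u x₁ with haa
  set c := u x₃ with hcc
  set b := u ((1 - l) • x₁ + l • x₃) with hbb
  have hD : 0 < l * a + (1 - l) * c := by
    rcases le_total a c with h | h
    · nlinarith [mul_nonneg (by linarith : (0:ℝ) ≤ 1 - l) (by linarith : (0:ℝ) ≤ c - a)]
    · nlinarith [mul_nonneg hl0 (by linarith : (0:ℝ) ≤ a - c)]
  have hHC := hhc x₁ hx₁ x₃ hx₃ l ⟨hl0, hl1⟩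
  rw [HCfun, if_pos hD] at hHC
  have hbac : a * c ≤ b * (l * a + (1 - l) * c) := by
    have := (div_le_iff₀ hD).mp (by linarith : a * c / (l * a + (1 - l) * c) ≤ b)
    linarith
  simp only [HCdom] at hdom
  simp only [HCfun]
  rcases hdom with hpos | ⟨h1, h3⟩
  · rw [if_pos hpos]
    rw [sub_nonneg, div_le_iff₀ hpos]
    nlinarith [mul_nonneg (sub_nonneg.2 hbac) (by nlinarith : (0:ℝ) ≤ l * a + (1 - l) * c - k),
      mul_nonneg hk (mul_nonneg (mul_nonneg hl0 (by linarith : (0:ℝ) ≤ 1 - l)) (sq_nonneg (a - c)))]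
  · have hak : a = k := by linarith
    have hck : c = k := by linarith
    rw [if_neg (by rw [show u x₁ - k = 0 from h1, show u x₃ - k = 0 from h3]; simp)]
    show 0 ≤ b - k
    rw [hak, hck] at hbac
    have hk' : 0 < k := hak ▸ ha
    nlinarith [hbac, hk']
end

section
/- Let K be a convex set and f, g : K → ℝ. For all x₁, x₃ ∈ K and λ ∈ [0,1], with x₂ = λx₃ + (1−λ)x₁, the concavity function of the product satisfies C_{fg}(x₁,x₃,λ) ≥ C_g(x₁,x₃,λ)·f(x₂) − osc(f)·(λ|g(x₃)| + (1−λ)|g(x₁)|), where osc(f) = sup f − inf f. In particular, if f is nonnegative and bounded and g is concave and bounded, then C_{fg}(x₁,x₃,λ) ≥ −‖g‖_∞ · osc(f). -/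
/-- The concavity function `C_h(x₁,x₃,λ) = h(x₂) - λ h(x₃) - (1-λ) h(x₁)`. -/
def Cfun {n : ℕ} (h : (Fin n → ℝ) → ℝ) (x₁ x₃ : Fin n → ℝ) (l : ℝ) : ℝ :=
  h ((1 - l) • x₁ + l • x₃) - l * h x₃ - (1 - l) * h x₁

/-- The oscillation `sup f - inf f` of `f` over `K`. -/
noncomputable def oscOn {n : ℕ} (K : Set (Fin n → ℝ)) (f : (Fin n → ℝ) → ℝ) : ℝ :=
  sSup (f '' K) - sInf (f '' K)

/-- `C_{fg} ≥ C_g · f(x₂) - osc(f)·(λ|g(x₃)| + (1-λ)|g(x₁)|)`; in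
particular, if `f` is nonnegative and `g` is concave with `|g| ≤ Mg`, then
`C_{fg} ≥ -Mg · osc(f)`. -/
theorem concavity_function_product {n : ℕ} (K : Set (Fin n → ℝ)) (hK : Convex ℝ K)
    (f g : (Fin n → ℝ) → ℝ)
    (hbddA : BddAbove (f '' K)) (hbddB : BddBelow (f '' K))
    (x₁ x₃ : Fin n → ℝ) (hx₁ : x₁ ∈ K) (hx₃ : x₃ ∈ K)
    (l : ℝ) (hl0 : 0 ≤ l) (hl1 : l ≤ 1) :
    (Cfun g x₁ x₃ l * f ((1 - l) • x₁ + l • x₃) -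
        oscOn K f * (l * |g x₃| + (1 - l) * |g x₁|) ≤
      Cfun (fun x => f x * g x) x₁ x₃ l) ∧
    ((∀ x ∈ K, 0 ≤ f x) → ConcaveOn ℝ K g →
      ∀ Mg : ℝ, (∀ x ∈ K, |g x| ≤ Mg) →
        -(Mg * oscOn K f) ≤ Cfun (fun x => f x * g x) x₁ x₃ l) := by
  set x₂ := (1 - l) • x₁ + l • x₃ with hx₂def
  have hx₂ : x₂ ∈ K := hK hx₁ hx₃ (by linarith) hl0 (by ring)
  -- |f a - f b| ≤ osc for a b ∈ K
  have hdiff : ∀ a ∈ K, ∀ b ∈ K, |f a - f b| ≤ oscOn K f := by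
    intro a ha b hb
    rw [abs_sub_le_iff]
    constructor <;> unfold oscOn
    · have h1 : f a ≤ sSup (f '' K) := le_csSup hbddA ⟨a, ha, rfl⟩
      have h2 : sInf (f '' K) ≤ f b := csInf_le hbddB ⟨b, hb, rfl⟩
      linarith
    · have h1 : f b ≤ sSup (f '' K) := le_csSup hbddA ⟨b, hb, rfl⟩
      have h2 : sInf (f '' K) ≤ f a := csInf_le hbddB ⟨a, ha, rfl⟩
      linarith
  have hosc0 : 0 ≤ oscOn K f := le_trans (abs_nonneg _) (hdiff x₁ hx₁ x₁ hx₁)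
  have h3 := abs_le.mp (hdiff x₂ hx₂ x₃ hx₃)
  have h1 := abs_le.mp (hdiff x₂ hx₂ x₁ hx₁)
  have key : Cfun (fun x => f x * g x) x₁ x₃ l =
      Cfun g x₁ x₃ l * f x₂ + l * g x₃ * (f x₂ - f x₃)
        + (1 - l) * g x₁ * (f x₂ - f x₁) := by
    simp only [Cfun]; ring
  have hb3 : -(oscOn K f * (l * |g x₃|)) ≤ l * g x₃ * (f x₂ - f x₃) := by
    have := mul_le_mul_of_nonneg_left
      (neg_abs_le (g x₃ * (f x₂ - f x₃))) hl0
    have habs : |g x₃ * (f x₂ - f x₃)| ≤ |g x₃| * oscOn K f := by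
      rw [abs_mul]
      exact mul_le_mul_of_nonneg_left (hdiff x₂ hx₂ x₃ hx₃) (abs_nonneg _)
    nlinarith [abs_nonneg (g x₃)]
  have hb1 : -(oscOn K f * ((1 - l) * |g x₁|)) ≤ (1 - l) * g x₁ * (f x₂ - f x₁) := by
    have h1l : (0:ℝ) ≤ 1 - l := by linarith
    have habs : |g x₁ * (f x₂ - f x₁)| ≤ |g x₁| * oscOn K f := by
      rw [abs_mul]
      exact mul_le_mul_of_nonneg_left (hdiff x₂ hx₂ x₁ hx₁) (abs_nonneg _)
    nlinarith [neg_abs_le (g x₁ * (f x₂ - f x₁)), abs_nonneg (g x₁)]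
  have main : Cfun g x₁ x₃ l * f x₂ -
      oscOn K f * (l * |g x₃| + (1 - l) * |g x₁|) ≤
      Cfun (fun x => f x * g x) x₁ x₃ l := by
    rw [key]; nlinarith
  refine ⟨main, fun hf hg Mg hMg => ?_⟩
  have hCg : 0 ≤ Cfun g x₁ x₃ l := by
    have := hg.2 hx₁ hx₃ (by linarith : (0:ℝ) ≤ 1 - l) hl0 (by ring)
    simp only [Cfun, smul_eq_mul] at *
    linarith
  have hfx₂ : 0 ≤ f x₂ := hf x₂ hx₂
  have hcomb : l * |g x₃| + (1 - l) * |g x₁| ≤ Mg := by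
    have h1 := hMg x₁ hx₁
    have h3 := hMg x₃ hx₃
    nlinarith
  have : oscOn K f * (l * |g x₃| + (1 - l) * |g x₁|) ≤ Mg * oscOn K f := by
    nlinarith
  nlinarith [mul_nonneg hCg hfx₂]
end

section
/- Hyers–Ulam stability of concavity: let K ⊂ ℝ^n be convex and f : K → ℝ be δ-concave, i.e., C_f(x₁,x₃,λ) ≥ −δ for all x₁,x₃ ∈ K, λ ∈ [0,1]. Then there exists a concave function g : K → ℝ with ‖f − g‖_{L^∞(K)} ≤ k_n δ, where k_n > 0 depends only on n. -/
open Finset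


lemma hu_key_combo {n : ℕ} {K : Set (Fin n → ℝ)} (hK : Convex ℝ K)
    (f : (Fin n → ℝ) → ℝ) (δ : ℝ) (hδ : 0 ≤ δ)
    (hf : ∀ x₁ ∈ K, ∀ x₃ ∈ K, ∀ l ∈ Set.Icc (0:ℝ) 1,
      -δ ≤ f ((1 - l) • x₁ + l • x₃) - l * f x₃ - (1 - l) * f x₁)
    {ι : Type*} (t : Finset ι) :
    ∀ (w : ι → ℝ) (z : ι → (Fin n → ℝ)),
      (∀ i ∈ t, 0 ≤ w i) → (∀ i ∈ t, z i ∈ K) → ∑ i ∈ t, w i = 1 →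
      ∑ i ∈ t, w i * f (z i) ≤ f (∑ i ∈ t, w i • z i) + t.card * δ := by
  classical
  induction t using Finset.induction with
  | empty => intro w z _ _ hsum; simp at hsum
  | @insert a s ha ih =>
    intro w z hw hz hsum
    rw [Finset.sum_insert ha] at hsum ⊢
    rw [Finset.sum_insert ha]
    have hwa : 0 ≤ w a := hw a (mem_insert_self a s)
    have hws : ∀ i ∈ s, 0 ≤ w i := fun i hi => hw i (mem_insert_of_mem hi)
    have hzs : ∀ i ∈ s, z i ∈ K := fun i hi => hz i (mem_insert_of_mem hi)
    set W := ∑ i ∈ s, w i with hW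
    have hW0 : 0 ≤ W := Finset.sum_nonneg hws
    rcases eq_or_lt_of_le hW0 with hWz | hWp
    · -- all weights on s vanish
      have hzero : ∀ i ∈ s, w i = 0 := by
        intro i hi
        have := (Finset.sum_eq_zero_iff_of_nonneg hws).1 hWz.symm
        exact this i hi
      have h1 : w a = 1 := by
        have : W = 0 := hWz.symm
        linarith [hsum]
      have e1 : ∑ i ∈ s, w i * f (z i) = 0 :=
        Finset.sum_eq_zero fun i hi => by rw [hzero i hi]; ring
      have e2 : ∑ i ∈ s, w i • z i = 0 :=
        Finset.sum_eq_zero fun i hi => by rw [hzero i hi]; simp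
      rw [e1, e2, h1]
      simp only [one_mul, one_smul, add_zero]
      have : (0:ℝ) ≤ (insert a s).card * δ := by positivity
      linarith
    · -- positive remaining mass
      set w' : ι → ℝ := fun i => w i / W with hw'
      have hw's : ∀ i ∈ s, 0 ≤ w' i := fun i hi => div_nonneg (hws i hi) hW0
      have hsum' : ∑ i ∈ s, w' i = 1 := by
        rw [hw']; rw [← Finset.sum_div]; field_simp; exact hW.symm
      set z' : Fin n → ℝ := ∑ i ∈ s, w' i • z i with hz'
      have hz'K : z' ∈ K := hK.sum_mem hw's hsum' hzs
      have hih := ih w' z hw's hzs hsum'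
      have hW1 : W ≤ 1 := by linarith
      have hfW := hf (z a) (hz a (mem_insert_self a s)) z' hz'K W ⟨hW0, hW1⟩
      have hwaW : 1 - W = w a := by linarith
      rw [hwaW] at hfW
      have eW : W • z' = ∑ i ∈ s, w i • z i := by
        rw [hz', Finset.smul_sum]
        refine Finset.sum_congr rfl fun i hi => ?_
        rw [smul_smul, hw']
        congr 1
        field_simp
      rw [eW] at hfW
      have eSum : ∑ i ∈ s, w i * f (z i) = W * ∑ i ∈ s, w' i * f (z i) := by
        rw [Finset.mul_sum]
        refine Finset.sum_congr rfl fun i hi => ?_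
        rw [hw']; field_simp
      rw [eSum]
      have h2 : W * ∑ i ∈ s, w' i * f (z i) ≤ W * (f z' + s.card * δ) :=
        mul_le_mul_of_nonneg_left hih hW0
      have h3 : W * (f z' + s.card * δ) ≤ W * f z' + s.card * δ := by
        have : W * (s.card * δ) ≤ 1 * (s.card * δ) := by
          apply mul_le_mul_of_nonneg_right hW1; positivity
        nlinarith
      have hcard : ((insert a s).card : ℝ) = s.card + 1 := by
        rw [Finset.card_insert_of_notMem ha]; push_cast; ring
      rw [hcard]
      nlinarith [hfW]


lemma hu_sup_combo {s t : Set ℝ} (hs : s.Nonempty) (ht : t.Nonempty)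
    {a b c : ℝ} (ha : 0 ≤ a) (hb : 0 ≤ b)
    (h : ∀ y₁ ∈ s, ∀ y₂ ∈ t, a * y₁ + b * y₂ ≤ c) :
    a * sSup s + b * sSup t ≤ c := by
  have h1 : ∀ y₁ ∈ s, a * y₁ + b * sSup t ≤ c := by
    intro y₁ hy₁
    rcases eq_or_lt_of_le hb with hb0 | hbp
    · obtain ⟨y₂, hy₂⟩ := ht
      have := h y₁ hy₁ y₂ hy₂
      rw [← hb0] at this ⊢
      linarith
    · have hst : sSup t ≤ (c - a * y₁) / b := by
        apply csSup_le ht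
        intro y₂ hy₂
        rw [le_div_iff₀ hbp]
        have := h y₁ hy₁ y₂ hy₂
        linarith
      have : b * sSup t ≤ c - a * y₁ := by
        rw [← le_div_iff₀' hbp] at *
        exact hst
      linarith
  rcases eq_or_lt_of_le ha with ha0 | hap
  · obtain ⟨y₁, hy₁⟩ := hs
    have := h1 y₁ hy₁
    rw [← ha0] at this ⊢
    linarith
  · have hss : sSup s ≤ (c - b * sSup t) / a := by
      apply csSup_le hs
      intro y₁ hy₁
      rw [le_div_iff₀ hap]
      have := h1 y₁ hy₁
      linarith
    have : a * sSup s ≤ c - b * sSup t := by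
      rw [← le_div_iff₀' hap] at *
      exact hss
    linarith


/-- Hyers–Ulam stability of concavity. There is a constant
`k_n > 0` depending only on the dimension `n` such that: every `δ`-concave
function `f` on a convex set `K ⊆ ℝⁿ` lies within `k_n·δ` (in sup norm on `K`)
of some concave function `g`. -/
theorem hyers_ulam_concavity {n : ℕ} :
    ∃ k : ℝ, 0 < k ∧
      ∀ (K : Set (Fin n → ℝ)), Convex ℝ K →
        ∀ (f : (Fin n → ℝ) → ℝ) (δ : ℝ), 0 ≤ δ →
          (∀ x₁ ∈ K, ∀ x₃ ∈ K, ∀ l ∈ Set.Icc (0:ℝ) 1,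
            -δ ≤ f ((1 - l) • x₁ + l • x₃) - l * f x₃ - (1 - l) * f x₁) →
          ∃ g : (Fin n → ℝ) → ℝ, ConcaveOn ℝ K g ∧ ∀ x ∈ K, |f x - g x| ≤ k * δ := by
  classical
  refine ⟨(n : ℝ) + 2, by positivity, ?_⟩
  intro K hK f δ hδ hf
  set G : Set ((Fin n → ℝ) × ℝ) := (fun x => (x, f x)) '' K with hG
  set H := convexHull ℝ G with hH
  set T : (Fin n → ℝ) → Set ℝ := fun x => {y : ℝ | (x, y) ∈ H} with hT
  have hmem : ∀ x ∈ K, f x ∈ T x := by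
    intro x hx
    exact subset_convexHull ℝ G ⟨x, hx, rfl⟩
  have hub : ∀ x ∈ K, ∀ y ∈ T x, y ≤ f x + ((n : ℝ) + 2) * δ := by
    intro x hx y hy
    obtain ⟨ι, hfin, z, w, hrange, hai, hpos, hsum, hrep⟩ :=
      eq_pos_convex_span_of_mem_convexHull hy
    letI := hfin
    -- cardinality bound
    have hcard : (Fintype.card ι : ℝ) ≤ (n : ℝ) + 2 := by
      have h1 := hai.card_le_finrank_succ
      have h2 : Module.finrank ℝ (vectorSpan ℝ (Set.range z)) ≤
          Module.finrank ℝ ((Fin n → ℝ) × ℝ) := Submodule.finrank_le _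
      have h3 : Module.finrank ℝ ((Fin n → ℝ) × ℝ) = n + 1 := by
        simp [Module.finrank_prod]
      have : Fintype.card ι ≤ n + 2 := by omega
      exact_mod_cast this
    -- extract base points
    set p : ι → (Fin n → ℝ) := fun i => (z i).1 with hp
    have hzi : ∀ i, p i ∈ K ∧ (z i).2 = f (p i) := by
      intro i
      obtain ⟨q, hq, hq2⟩ := hrange ⟨i, rfl⟩
      constructor
      · rw [hp]; simp only [← hq2]; exact hq
      · rw [hp]; simp only [← hq2]
    have hx1 : ∑ i, w i • p i = x := by
      have := congrArg Prod.fst hrep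
      simpa [Prod.fst_sum, hp] using this
    have hy2 : ∑ i, w i * f (p i) = y := by
      have := congrArg Prod.snd hrep
      simp only [Prod.snd_sum, Prod.smul_snd, smul_eq_mul] at this
      rw [← this]
      exact Finset.sum_congr rfl fun i _ => by rw [(hzi i).2]
    have hkey := hu_key_combo hK f δ hδ hf (Finset.univ : Finset ι) w p
      (fun i _ => (hpos i).le) (fun i _ => (hzi i).1) hsum
    rw [hx1, hy2 ] at hkey
    have hcδ : (((Finset.univ : Finset ι).card : ℝ)) * δ ≤ ((n : ℝ) + 2) * δ := by
      apply mul_le_mul_of_nonneg_right _ hδ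
      simpa [Finset.card_univ] using hcard
    linarith
  have hbdd : ∀ x ∈ K, BddAbove (T x) := fun x hx => ⟨f x + ((n:ℝ)+2)*δ, fun y hy => hub x hx y hy⟩
  have hne : ∀ x ∈ K, (T x).Nonempty := fun x hx => ⟨f x, hmem x hx⟩
  refine ⟨fun x => sSup (T x), ⟨hK, ?_⟩, ?_⟩
  · intro x hx y hy a b ha hb hab
    simp only [smul_eq_mul]
    have hmid : a • x + b • y ∈ K := hK hx hy ha hb hab
    apply hu_sup_combo (hne x hx) (hne y hy) ha hb
    intro y₁ hy₁ y₂ hy₂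
    have hHmem : (a • x + b • y, a * y₁ + b * y₂) ∈ H := by
      have := (convex_convexHull ℝ G) hy₁ hy₂ ha hb hab
      convert this using 1
      simp [Prod.smul_mk, Prod.mk_add_mk, smul_eq_mul]
    exact le_csSup (hbdd _ hmid) hHmem
  · intro x hx
    have hlow : f x ≤ sSup (T x) := le_csSup (hbdd x hx) (hmem x hx)
    have hhigh : sSup (T x) ≤ f x + ((n:ℝ)+2)*δ := csSup_le (hne x hx) (hub x hx)
    rw [abs_le]
    constructor <;> nlinarith
end

section
/- Key quadratic-form lemma in the concavity maximum principle: suppose real numbers Q₁, Q₂, Q₃ and λ ∈ (0,1) satisfy αs² + 2βsr + γr² ≥ 0 for all s,r ∈ ℝ, where α = (1−λ)²Q₂ − (1−λ)Q₁, β = λ(1−λ)Q₂, γ = λ²Q₂ − λQ₃. Then either (1−λ)Q₃ + λQ₁ < 0 and Q₂ ≥ Q₁Q₃/((1−λ)Q₃ + λQ₁), or Q₁ = Q₃ = 0 and Q₂ ≥ 0. -/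
/-- Key quadratic-form lemma in the concavity maximum principle:
if `λ ∈ (0,1)` and the quadratic form with coefficients
`α = (1-λ)²Q₂ - (1-λ)Q₁`, `β = λ(1-λ)Q₂`, `γ = λ²Q₂ - λQ₃` is positive
semidefinite, then either `(1-λ)Q₃ + λQ₁ < 0` and
`Q₂ ≥ Q₁Q₃/((1-λ)Q₃ + λQ₁)`, or `Q₁ = Q₃ = 0` and `Q₂ ≥ 0`. -/
theorem quadratic_form_lemma (Q₁ Q₂ Q₃ l : ℝ) (hl0 : 0 < l) (hl1 : l < 1)
    (hpsd : ∀ s r : ℝ,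
      0 ≤ ((1 - l) ^ 2 * Q₂ - (1 - l) * Q₁) * s ^ 2 +
          2 * (l * (1 - l) * Q₂) * s * r + (l ^ 2 * Q₂ - l * Q₃) * r ^ 2) :
    ((1 - l) * Q₃ + l * Q₁ < 0 ∧ Q₁ * Q₃ / ((1 - l) * Q₃ + l * Q₁) ≤ Q₂) ∨
      (Q₁ = 0 ∧ Q₃ = 0 ∧ 0 ≤ Q₂) := by
  have hl1' : 0 < 1 - l := by linarith
  have hα : 0 ≤ (1 - l) ^ 2 * Q₂ - (1 - l) * Q₁ := by have := hpsd 1 0; nlinarith [this]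
  have hγ : 0 ≤ l ^ 2 * Q₂ - l * Q₃ := by have := hpsd 0 1; nlinarith [this]
  have hα' : Q₁ ≤ (1 - l) * Q₂ := by nlinarith [hα, hl1']
  have hγ' : Q₃ ≤ l * Q₂ := by nlinarith [hγ, hl0]
  have hd : discrim ((1 - l) ^ 2 * Q₂ - (1 - l) * Q₁) (2 * (l * (1 - l) * Q₂))
      (l ^ 2 * Q₂ - l * Q₃) ≤ 0 := by
    apply discrim_le_zero
    intro x
    have := hpsd x 1
    nlinarith [this]
  rw [discrim] at hd
  have hpos : 0 < l * (1 - l) := mul_pos hl0 hl1'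
  have key : Q₂ * ((1 - l) * Q₃ + l * Q₁) ≤ Q₁ * Q₃ := by nlinarith [hd, hpos]
  by_cases hD : (1 - l) * Q₃ + l * Q₁ < 0
  · left
    refine ⟨hD, ?_⟩
    rw [div_le_iff_of_neg hD]
    linarith [key]
  · right
    push_neg at hD
    have hQ2 : 0 ≤ Q₂ := by nlinarith [hα', hγ', hD]
    have hQD : 0 ≤ Q₂ * ((1 - l) * Q₃ + l * Q₁) := mul_nonneg hQ2 hD
    have h1 : 0 ≤ Q₁ := by
      by_contra h
      push_neg at h
      have h3p : 0 < Q₃ := by nlinarith [hD]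
      nlinarith [key, hQD, mul_pos (neg_pos.2 h) h3p]
    have h3 : 0 ≤ Q₃ := by
      by_contra h
      push_neg at h
      have h1p : 0 < Q₁ := by nlinarith [hD]
      nlinarith [key, hQD, mul_pos h1p (neg_pos.2 h)]
    have h1' : Q₁ ≤ 0 := by
      by_contra h
      push_neg at h
      have hQ2pos : 0 < Q₂ := by nlinarith [hα', h, hl1']
      nlinarith [key, mul_nonneg (sub_nonneg.2 hα') h3, mul_pos (mul_pos hl0 h) hQ2pos]
    have h3' : Q₃ ≤ 0 := by
      by_contra h
      push_neg at h
      have hQ2pos : 0 < Q₂ := by nlinarith [hγ', h, hl0]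
      nlinarith [key, mul_nonneg (sub_nonneg.2 hγ') h1, mul_pos (mul_pos hl1' h) hQ2pos]
    exact ⟨le_antisymm h1' h1, le_antisymm h3' h3, hQ2⟩
end
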